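/- Let I = I(G) be the edge ideal of a finite simple graph G. For every vertex t_i of G, v(I) ≤ v((I, t_i)) + 1, where (I, t_i) = I + (t_i) is the ideal generated by I and the variable t_i. -/

import Mathlib

open MvPolynomial

attribute [local instance] Classical.propDecidable

/-- The v-number of a graded ideal `I` of a polynomial ring: the least `d ≥ 1` such that
there is a homogeneous polynomial `f` of degree `d` and an associated prime `p` of `S/I`
with `(I : f) = p`; by convention it is `0` when `I` is the ideal generated by the variables. -/
noncomputable def vNumber {K : Type*} [Field K] {σ : Type*}
    (I : Ideal (MvPolynomial σ K)) : ℕ :=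
  if I = Ideal.span (Set.range (X : σ → MvPolynomial σ K)) then 0
  else sInf {d : ℕ | 1 ≤ d ∧ ∃ f : MvPolynomial σ K, f.IsHomogeneous d ∧
    ∃ p ∈ associatedPrimes (MvPolynomial σ K) (MvPolynomial σ K ⧸ I),
      Submodule.colon I (Ideal.span {f}) = p}

/-- A squarefree monomial ideal: an ideal generated by squarefree monomials,
i.e. by products of distinct variables. -/
def IsSquarefreeMonomialIdeal {K : Type*} [Field K] {σ : Type*}
    (I : Ideal (MvPolynomial σ K)) : Prop :=
  ∃ E : Set (Finset σ), I = Ideal.span ((fun e : Finset σ => ∏ i ∈ e, X i) '' E)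

/-- A clutter on the vertex set `Fin s`: a family of edges, none of which contains another. -/
structure Clutter (s : ℕ) where
  edges : Finset (Finset (Fin s))
  antichain : ∀ e ∈ edges, ∀ f ∈ edges, e ⊆ f → e = f

namespace Clutter

variable {s : ℕ} (C : Clutter s)

/-- The edge ideal of a clutter. -/
noncomputable def edgeIdeal (K : Type*) [Field K] : Ideal (MvPolynomial (Fin s) K) :=
  Ideal.span ((fun e : Finset (Fin s) => ∏ i ∈ e, X i) '' C.edges)

/-- A stable (independent) set of a clutter: a set of vertices containing no edge. -/
def Stable (A : Finset (Fin s)) : Prop := ∀ e ∈ C.edges, ¬ (e ⊆ A)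

/-- A maximal stable set of a clutter. -/
def MaximalStable (A : Finset (Fin s)) : Prop :=
  C.Stable A ∧ ∀ B : Finset (Fin s), C.Stable B → A ⊆ B → A = B

/-- The neighbor set `N_C(A)`: all vertices `i` such that `{i} ∪ A` contains an edge. -/
noncomputable def neighborSet (A : Finset (Fin s)) : Finset (Fin s) :=
  Finset.univ.filter (fun i => ∃ e ∈ C.edges, e ⊆ insert i A)

/-- A vertex cover of a clutter: a set of vertices meeting every edge. -/
def IsVertexCover (B : Finset (Fin s)) : Prop := ∀ e ∈ C.edges, ∃ i ∈ e, i ∈ B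

/-- A minimal vertex cover: a vertex cover minimal with respect to inclusion. -/
def IsMinimalVertexCover (B : Finset (Fin s)) : Prop :=
  C.IsVertexCover B ∧ ∀ B' ⊂ B, ¬ C.IsVertexCover B'

/-- The independence number `β₀(C)`: the maximum size of a stable set. -/
noncomputable def indepNum : ℕ := sSup {n : ℕ | ∃ A : Finset (Fin s), C.Stable A ∧ A.card = n}

/-- The independent domination number `i(C)`: the minimum size of a maximal stable set. -/
noncomputable def idomNum : ℕ :=
  sInf {n : ℕ | ∃ A : Finset (Fin s), C.MaximalStable A ∧ A.card = n}

/-- The vertex covering number `α₀(C)`: the minimum size of a vertex cover. -/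
noncomputable def coverNum : ℕ :=
  sInf {n : ℕ | ∃ B : Finset (Fin s), C.IsVertexCover B ∧ B.card = n}

/-- The ideal of covers of a clutter, generated by the monomials of the minimal vertex covers. -/
noncomputable def coverIdeal (K : Type*) [Field K] : Ideal (MvPolynomial (Fin s) K) :=
  Ideal.span ((fun B : Finset (Fin s) => ∏ i ∈ B, X i) '' {B | C.IsMinimalVertexCover B})

/-- The clutter is well-covered if every maximal stable set has maximum cardinality `β₀(C)`. -/
def WellCovered : Prop := ∀ A : Finset (Fin s), C.MaximalStable A → A.card = C.indepNum

/-- Deletion of an edge from a clutter. -/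
def deleteEdge (e : Finset (Fin s)) : Clutter s :=
  ⟨C.edges.erase e, fun a ha b hb hab =>
    C.antichain a (Finset.mem_of_mem_erase ha) b (Finset.mem_of_mem_erase hb) hab⟩

/-- An edge-critical clutter: deleting any edge increases the independence number. -/
def EdgeCritical : Prop := ∀ e ∈ C.edges, C.indepNum < (C.deleteEdge e).indepNum

end Clutter

section Graphs

variable {V : Type*}

/-- The edge ideal of a simple graph. -/
noncomputable def gEdgeIdeal (K : Type*) [Field K] (G : SimpleGraph V) :
    Ideal (MvPolynomial V K) :=
  Ideal.span {m : MvPolynomial V K | ∃ i j : V, G.Adj i j ∧ m = X i * X j}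

/-- A stable (independent) set of vertices of a graph. -/
def gStable (G : SimpleGraph V) (A : Finset V) : Prop := ∀ i ∈ A, ∀ j ∈ A, ¬ G.Adj i j

/-- A maximal stable set of a graph. -/
def gMaximalStable (G : SimpleGraph V) (A : Finset V) : Prop :=
  gStable G A ∧ ∀ B : Finset V, gStable G B → A ⊆ B → A = B

/-- The independence number `β₀(G)`. -/
noncomputable def gIndepNum [Fintype V] (G : SimpleGraph V) : ℕ :=
  sSup {n : ℕ | ∃ A : Finset V, gStable G A ∧ A.card = n}

/-- A maximum stable set: a stable set of maximum cardinality `β₀(G)`. -/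
def gMaximumStable [Fintype V] (G : SimpleGraph V) (A : Finset V) : Prop :=
  gStable G A ∧ A.card = gIndepNum G

/-- The independent domination number `i(G)`: minimum size of a maximal stable set. -/
noncomputable def gIdomNum (G : SimpleGraph V) : ℕ :=
  sInf {n : ℕ | ∃ A : Finset V, gMaximalStable G A ∧ A.card = n}

/-- A well-covered graph: every maximal stable set is a maximum stable set. -/
def gWellCovered [Fintype V] (G : SimpleGraph V) : Prop :=
  ∀ A : Finset V, gMaximalStable G A → A.card = gIndepNum G

/-- The class `W₂`: graphs with at least two vertices in which any two disjoint stable sets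
are contained in two disjoint maximum stable sets. -/
def W2 [Fintype V] (G : SimpleGraph V) : Prop :=
  2 ≤ Fintype.card V ∧ ∀ A B : Finset V, gStable G A → gStable G B → Disjoint A B →
    ∃ A' B' : Finset V, gMaximumStable G A' ∧ gMaximumStable G B' ∧ Disjoint A' B' ∧
      A ⊆ A' ∧ B ⊆ B'

/-- The neighbor set of a set of vertices of a graph: all vertices adjacent to a vertex of `A`. -/
noncomputable def gNeighborSet [Fintype V] (G : SimpleGraph V) (A : Finset V) : Finset V :=
  Finset.univ.filter (fun i => ∃ j ∈ A, G.Adj i j)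

/-- A vertex cover of a graph. -/
def gIsVertexCover (G : SimpleGraph V) (B : Finset V) : Prop :=
  ∀ i j : V, G.Adj i j → i ∈ B ∨ j ∈ B

/-- A minimal vertex cover of a graph. -/
def gIsMinimalVertexCover (G : SimpleGraph V) (B : Finset V) : Prop :=
  gIsVertexCover G B ∧ ∀ B' ⊂ B, ¬ gIsVertexCover G B'

/-- An edge-critical graph: deleting any edge increases the independence number. -/
def gEdgeCritical [Fintype V] (G : SimpleGraph V) : Prop :=
  ∀ i j : V, G.Adj i j → gIndepNum G < gIndepNum (G.deleteEdges {s(i, j)})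

end Graphs

namespace VNumAux

open Finset

variable {K : Type*} [Field K] {s : ℕ}

noncomputable def eexp (a b : Fin s) : Fin s →₀ ℕ := Finsupp.single a 1 + Finsupp.single b 1

lemma X_eq_monomial {σ : Type*} (a : σ) :
    (X a : MvPolynomial σ K) = monomial (Finsupp.single a 1) 1 := by
  rw [← X_pow_eq_monomial, pow_one]

lemma X_mul_X (a b : Fin s) : (X a : MvPolynomial (Fin s) K) * X b = monomial (eexp a b) 1 := by
  rw [X_eq_monomial a, X_eq_monomial b, monomial_mul, one_mul, eexp]

/-- the set of exponents of edges of `G` -/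
def edgeExps (G : SimpleGraph (Fin s)) : Set (Fin s →₀ ℕ) :=
  {μ | ∃ a b, G.Adj a b ∧ μ = Finsupp.single a 1 + Finsupp.single b 1}

lemma gEdgeIdeal_eq_span (G : SimpleGraph (Fin s)) :
    gEdgeIdeal K G = Ideal.span ((fun m => monomial m (1 : K)) '' edgeExps G) := by
  unfold gEdgeIdeal
  congr 1
  ext m
  constructor
  · rintro ⟨a, b, hab, rfl⟩
    exact ⟨eexp a b, ⟨a, b, hab, rfl⟩, (X_mul_X a b).symm⟩
  · rintro ⟨μ, ⟨a, b, hab, rfl⟩, rfl⟩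
    exact ⟨a, b, hab, (X_mul_X a b).symm⟩

lemma mem_gEdgeIdeal_iff (G : SimpleGraph (Fin s)) (v : MvPolynomial (Fin s) K) :
    v ∈ gEdgeIdeal K G ↔
      ∀ μ ∈ v.support, ∃ a b, G.Adj a b ∧ Finsupp.single a 1 + Finsupp.single b 1 ≤ μ := by
  rw [gEdgeIdeal_eq_span, mem_ideal_span_monomial_image]
  constructor
  · intro h μ hμ
    obtain ⟨e, ⟨a, b, hab, rfl⟩, hle⟩ := h μ hμ
    exact ⟨a, b, hab, hle⟩
  · intro h μ hμ
    obtain ⟨a, b, hab, hle⟩ := h μ hμ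
    exact ⟨_, ⟨a, b, hab, rfl⟩, hle⟩

lemma J_eq_span (G : SimpleGraph (Fin s)) (i : Fin s) :
    gEdgeIdeal K G ⊔ Ideal.span {(X i : MvPolynomial (Fin s) K)} =
      Ideal.span ((fun m => monomial m (1 : K)) '' (edgeExps G ∪ {Finsupp.single i 1})) := by
  rw [gEdgeIdeal_eq_span, Set.image_union, ← Ideal.span_union]
  congr 2
  simp [X_eq_monomial i]

lemma mem_J_iff (G : SimpleGraph (Fin s)) (i : Fin s) (v : MvPolynomial (Fin s) K) :
    v ∈ gEdgeIdeal K G ⊔ Ideal.span {(X i : MvPolynomial (Fin s) K)} ↔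
      ∀ μ ∈ v.support, (∃ a b, G.Adj a b ∧ Finsupp.single a 1 + Finsupp.single b 1 ≤ μ) ∨
        Finsupp.single i 1 ≤ μ := by
  rw [J_eq_span, mem_ideal_span_monomial_image]
  constructor
  · intro h μ hμ
    obtain ⟨e, he, hle⟩ := h μ hμ
    rcases he with ⟨a, b, hab, rfl⟩ | he
    · exact Or.inl ⟨a, b, hab, hle⟩
    · rw [Set.mem_singleton_iff] at he; subst he; exact Or.inr hle
  · intro h μ hμ
    rcases h μ hμ with ⟨a, b, hab, hle⟩ | hle
    · exact ⟨_, Or.inl ⟨a, b, hab, rfl⟩, hle⟩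
    · exact ⟨_, Or.inr rfl, hle⟩

/-- Ideals generated by a set of variables are prime. -/
lemma isPrime_span_X_image (B : Set (Fin s)) :
    (Ideal.span (X '' B : Set (MvPolynomial (Fin s) K))).IsPrime := by
  classical
  set φ : MvPolynomial (Fin s) K →+* MvPolynomial (Fin s) K :=
    (aeval (fun j => if j ∈ B then 0 else X j) :
      MvPolynomial (Fin s) K →ₐ[K] MvPolynomial (Fin s) K).toRingHom with hφ
  have hmono : ∀ (μ : Fin s →₀ ℕ) (c : K),
      φ (monomial μ c) = if ∀ j ∈ B, μ j = 0 then monomial μ c else 0 := by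
    intro μ c
    rw [hφ]
    simp only [AlgHom.toRingHom_eq_coe, RingHom.coe_coe]
    rw [aeval_monomial]
    by_cases hfree : ∀ j ∈ B, μ j = 0
    · rw [if_pos hfree]
      have : (μ.prod fun n e => (fun j => if j ∈ B then (0 : MvPolynomial (Fin s) K) else X j) n ^ e)
          = μ.prod fun n e => (X n) ^ e := by
        apply Finsupp.prod_congr
        intro j hj
        have : j ∉ B := fun hjB => (Finsupp.mem_support_iff.mp hj) (hfree j hjB)
        simp [this]
      rw [this]
      rw [Finsupp.prod]
      rw [prod_X_pow_eq_monomial]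
      rw [algebraMap_eq, C_mul_monomial, mul_one]
    · rw [if_neg hfree]
      push_neg at hfree
      obtain ⟨j, hjB, hj0⟩ := hfree
      have hjsupp : j ∈ μ.support := Finsupp.mem_support_iff.mpr hj0
      rw [Finsupp.prod]
      rw [Finset.prod_eq_zero hjsupp]
      · rw [mul_zero]
      · rw [if_pos hjB, zero_pow hj0]
  have hker : Ideal.span (X '' B : Set (MvPolynomial (Fin s) K)) = RingHom.ker φ := by
    apply le_antisymm
    · rw [Ideal.span_le]
      rintro _ ⟨j, hj, rfl⟩
      simp only [SetLike.mem_coe, RingHom.mem_ker, hφ, AlgHom.toRingHom_eq_coe, RingHom.coe_coe,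
        aeval_X]
      rw [if_pos hj]
    · intro v hv
      rw [RingHom.mem_ker] at hv
      rw [mem_ideal_span_X_image]
      intro μ hμ
      by_contra hall
      push_neg at hall
      have hμfree : ∀ j ∈ B, μ j = 0 := hall
      have hcoeff : coeff μ (φ v) = coeff μ v := by
        conv_lhs => rw [v.as_sum, map_sum]
        rw [Finset.sum_congr rfl (fun ν _ => hmono ν (coeff ν v))]
        rw [coeff_sum]
        rw [Finset.sum_eq_single μ]
        · rw [if_pos hμfree, coeff_monomial, if_pos rfl]
        · intro ν _ hne
          by_cases h : ∀ j ∈ B, ν j = 0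
          · rw [if_pos h, coeff_monomial, if_neg hne]
          · rw [if_neg h, coeff_zero]
        · intro hnot
          exact absurd hμ hnot
      rw [hv, coeff_zero] at hcoeff
      exact (Finsupp.mem_support_iff.mp hμ) hcoeff.symm
  rw [hker]
  exact RingHom.ker_isPrime φ

/-- A prime colon ideal is an associated prime of the quotient. -/
lemma colon_mem_associatedPrimes (I : Ideal (MvPolynomial (Fin s) K)) (g : MvPolynomial (Fin s) K)
    (h : (Submodule.colon I (Ideal.span {g})).IsPrime) :
    Submodule.colon I (Ideal.span {g}) ∈
      associatedPrimes (MvPolynomial (Fin s) K) (MvPolynomial (Fin s) K ⧸ I) := by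
  refine (isAssociatedPrime_iff).mpr ⟨h, Ideal.Quotient.mk I g, ?_⟩
  ext r
  rw [Submodule.mem_colon_singleton, Ideal.mem_colon_span_singleton, Submodule.mem_bot,
    show r • (Ideal.Quotient.mk I g) = Ideal.Quotient.mk I (r * g) from rfl,
    Ideal.Quotient.eq_zero_iff_mem]

/-- Squarefree monomial ideals are radical. -/
lemma mem_of_sq_mem (E : Set (Fin s →₀ ℕ)) (hE : ∀ e ∈ E, ∀ j, e j ≤ 1)
    {f : MvPolynomial (Fin s) K}
    (hf : f * f ∈ Ideal.span ((fun m => monomial m (1 : K)) '' E)) :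
    f ∈ Ideal.span ((fun m => monomial m (1 : K)) '' E) := by
  rw [mem_ideal_span_monomial_image]
  intro μ hμ
  by_contra hnone
  push_neg at hnone
  set C : Set (Fin s) := {j | μ j = 0} with hC
  have hsub : Ideal.span ((fun m => monomial m (1 : K)) '' E) ≤
      Ideal.span (X '' C : Set (MvPolynomial (Fin s) K)) := by
    rw [Ideal.span_le]
    rintro _ ⟨e, he, rfl⟩
    rw [SetLike.mem_coe, mem_ideal_span_X_image]
    intro ν hν
    rw [support_monomial, if_neg (one_ne_zero)] at hν
    rw [Finset.mem_singleton] at hν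
    subst hν
    -- find j with ν j ≠ 0 and μ j = 0
    by_contra hcon
    push_neg at hcon
    refine hnone ν he ?_
    rw [Finsupp.le_def]
    intro j
    by_cases hj : μ j = 0
    · have := hcon j hj
      omega
    · have := hE ν he j
      omega
  have hprime := isPrime_span_X_image (K := K) C
  have hfC : f ∈ Ideal.span (X '' C : Set (MvPolynomial (Fin s) K)) := by
    rcases hprime.mem_or_mem (hsub hf) with h | h <;> exact h
  rw [mem_ideal_span_X_image] at hfC
  obtain ⟨j, hjC, hj0⟩ := hfC μ hμ
  exact hj0 hjC


/-- A polynomial not involving the variable `i`. -/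
def iFree (i : Fin s) (v : MvPolynomial (Fin s) K) : Prop := ∀ μ ∈ v.support, μ i = 0

lemma iFree_mul {i : Fin s} {v w : MvPolynomial (Fin s) K} (hv : iFree i v) (hw : iFree i w) :
    iFree i (v * w) := by
  classical
  intro μ hμ
  have := MvPolynomial.support_mul v w hμ
  rw [Finset.mem_add] at this
  obtain ⟨α, hα, β, hβ, rfl⟩ := this
  simp [Finsupp.add_apply, hv α hα, hw β hβ]

/-- The part of `f` not involving the variable `i` (substituting `X i ↦ 0`). -/
noncomputable def part0 (i : Fin s) (f : MvPolynomial (Fin s) K) : MvPolynomial (Fin s) K :=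
  ∑ μ ∈ f.support.filter (fun μ => μ i = 0), monomial μ (MvPolynomial.coeff μ f)

lemma coeff_part0 (i : Fin s) (f : MvPolynomial (Fin s) K) (μ : Fin s →₀ ℕ) :
    MvPolynomial.coeff μ (part0 i f) = if μ i = 0 then MvPolynomial.coeff μ f else 0 := by
  classical
  rw [part0, coeff_sum]
  by_cases h : μ i = 0
  · rw [if_pos h]
    by_cases hμ : μ ∈ f.support
    · rw [Finset.sum_eq_single μ]
      · rw [coeff_monomial, if_pos rfl]
      · intro ν _ hne
        rw [coeff_monomial, if_neg hne]
      · intro hnot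
        exact absurd (Finset.mem_filter.mpr ⟨hμ, h⟩) hnot
    · rw [MvPolynomial.notMem_support_iff.mp hμ]
      apply Finset.sum_eq_zero
      intro ν hν
      rw [coeff_monomial]
      by_cases heq : ν = μ
      · subst heq
        exact absurd hν (by simp [Finset.mem_filter, MvPolynomial.notMem_support_iff.mp hμ,
          MvPolynomial.mem_support_iff])
      · rw [if_neg heq]
  · rw [if_neg h]
    apply Finset.sum_eq_zero
    intro ν hν
    rw [coeff_monomial]
    rcases Finset.mem_filter.mp hν with ⟨_, hν0⟩
    have hne : ν ≠ μ := fun he => h (he ▸ hν0)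
    rw [if_neg hne]

lemma iFree_part0 (i : Fin s) (f : MvPolynomial (Fin s) K) : iFree i (part0 i f) := by
  intro μ hμ
  rw [MvPolynomial.mem_support_iff, coeff_part0] at hμ
  by_contra h
  rw [if_neg h] at hμ
  exact hμ rfl

lemma support_part0_subset (i : Fin s) (f : MvPolynomial (Fin s) K) :
    (part0 i f).support ⊆ f.support := by
  intro μ hμ
  rw [MvPolynomial.mem_support_iff, coeff_part0] at hμ
  rw [MvPolynomial.mem_support_iff]
  intro h0
  rw [h0] at hμ
  simp at hμ

lemma isHomogeneous_part0 {i : Fin s} {f : MvPolynomial (Fin s) K} {d : ℕ}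
    (hf : f.IsHomogeneous d) : (part0 i f).IsHomogeneous d := by
  intro μ hμ
  have : MvPolynomial.coeff μ (part0 i f) ≠ 0 := hμ
  rw [coeff_part0] at this
  by_cases h : μ i = 0
  · rw [if_pos h] at this
    exact hf this
  · rw [if_neg h] at this
    exact absurd rfl this

lemma sub_part0_mem (i : Fin s) (f : MvPolynomial (Fin s) K) :
    f - part0 i f ∈ Ideal.span {(X i : MvPolynomial (Fin s) K)} := by
  have : ({(X i : MvPolynomial (Fin s) K)} : Set _) = X '' {i} := by simp
  rw [this, mem_ideal_span_X_image]
  intro μ hμ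
  refine ⟨i, rfl, ?_⟩
  rw [MvPolynomial.mem_support_iff, MvPolynomial.coeff_sub, coeff_part0] at hμ
  intro h0
  rw [if_pos h0, sub_self] at hμ
  exact hμ rfl

lemma supp_X_pow_mul {i : Fin s} {m : ℕ} {w : MvPolynomial (Fin s) K} (hw : iFree i w) :
    ∀ μ ∈ ((X i : MvPolynomial (Fin s) K) ^ m * w).support, μ i = m := by
  classical
  intro μ hμ
  have := MvPolynomial.support_mul ((X i : MvPolynomial (Fin s) K) ^ m) w hμ
  rw [Finset.mem_add] at this
  obtain ⟨α, hα, β, hβ, rfl⟩ := this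
  rw [X_pow_eq_monomial, support_monomial, if_neg one_ne_zero, Finset.mem_singleton] at hα
  subst hα
  simp [Finsupp.add_apply, Finsupp.single_apply, hw β hβ]

lemma coeff_X_pow_mul (i : Fin s) (m : ℕ) (w : MvPolynomial (Fin s) K) (μ : Fin s →₀ ℕ) :
    MvPolynomial.coeff (Finsupp.single i m + μ) ((X i : MvPolynomial (Fin s) K) ^ m * w)
      = MvPolynomial.coeff μ w := by
  rw [X_pow_eq_monomial, coeff_monomial_mul, one_mul]



/-- The isomorphism with a polynomial ring in `X i` over the remaining variables. -/
noncomputable def Phi (K : Type*) [Field K] {s : ℕ} (i : Fin s) :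
    MvPolynomial (Fin s) K ≃ₐ[K] Polynomial (MvPolynomial {j : Fin s // j ≠ i} K) :=
  (renameEquiv K (Equiv.optionSubtypeNe i).symm).trans (optionEquivLeft K {j : Fin s // j ≠ i})

lemma Phi_X_self (i : Fin s) : Phi K i (X i) = Polynomial.X := by
  rw [Phi]
  simp only [AlgEquiv.trans_apply, renameEquiv_apply, rename_X]
  rw [Equiv.optionSubtypeNe_symm_self, optionEquivLeft_X_none]

lemma Phi_rename (r : MvPolynomial {j : Fin s // j ≠ i} K) :
    Phi K i (rename Subtype.val r) = Polynomial.C r := by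
  have h : ((Phi K i : MvPolynomial (Fin s) K →+* _).comp
        ((rename (Subtype.val : {j : Fin s // j ≠ i} → Fin s)) :
          MvPolynomial {j : Fin s // j ≠ i} K →ₐ[K] MvPolynomial (Fin s) K).toRingHom) =
      (Polynomial.C : MvPolynomial {j : Fin s // j ≠ i} K →+* _) := by
    apply MvPolynomial.ringHom_ext
    · intro k
      simp only [RingHom.coe_comp, Function.comp_apply, AlgHom.toRingHom_eq_coe, RingHom.coe_coe,
        rename_C]
      rw [Phi]
      simp only [AlgEquiv.trans_apply, renameEquiv_apply, rename_C]
      rw [optionEquivLeft_C]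
    · intro j
      simp only [RingHom.coe_comp, Function.comp_apply, AlgHom.toRingHom_eq_coe, RingHom.coe_coe,
        rename_X]
      rw [Phi]
      simp only [AlgEquiv.trans_apply, renameEquiv_apply, rename_X]
      rw [Equiv.optionSubtypeNe_symm_of_ne j.prop]
      rw [show (⟨(j : Fin s), j.prop⟩ : {j : Fin s // j ≠ i}) = j from rfl]
      rw [optionEquivLeft_X_some]
  calc Phi K i (rename Subtype.val r)
      = ((Phi K i : MvPolynomial (Fin s) K →+* _).comp
        ((rename (Subtype.val : {j : Fin s // j ≠ i} → Fin s)) :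
          MvPolynomial {j : Fin s // j ≠ i} K →ₐ[K] MvPolynomial (Fin s) K).toRingHom) r := rfl
    _ = Polynomial.C r := by rw [h]

lemma Phi_symm_C (i : Fin s) (r : MvPolynomial {j : Fin s // j ≠ i} K) :
    (Phi K i).symm (Polynomial.C r) = rename Subtype.val r := by
  rw [← Phi_rename, AlgEquiv.symm_apply_apply]

lemma iFree_Phi_symm_C (i : Fin s) (r : MvPolynomial {j : Fin s // j ≠ i} K) :
    iFree i ((Phi K i).symm (Polynomial.C r)) := by
  classical
  rw [Phi_symm_C]
  intro μ hμ
  rw [support_rename_of_injective Subtype.val_injective, Finset.mem_image] at hμ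
  obtain ⟨ν, _, rfl⟩ := hμ
  apply Finsupp.mapDomain_notin_range
  rintro ⟨j, hj⟩
  exact j.prop hj

lemma decomp (i : Fin s) (v : MvPolynomial (Fin s) K) :
    v = ∑ k ∈ Finset.range ((Phi K i v).natDegree + 1),
      (X i : MvPolynomial (Fin s) K) ^ k *
        (Phi K i).symm (Polynomial.C ((Phi K i v).coeff k)) := by
  apply (Phi K i).injective
  rw [map_sum]
  have : ∀ k, Phi K i ((X i : MvPolynomial (Fin s) K) ^ k *
      (Phi K i).symm (Polynomial.C ((Phi K i v).coeff k)))
      = Polynomial.C ((Phi K i v).coeff k) * Polynomial.X ^ k := by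
    intro k
    rw [map_mul, map_pow, Phi_X_self, AlgEquiv.apply_symm_apply, mul_comm]
  rw [Finset.sum_congr rfl (fun k _ => this k)]
  conv_lhs => rw [Polynomial.as_sum_range' (Phi K i v) ((Phi K i v).natDegree + 1)
    (Nat.lt_succ_self _)]
  apply Finset.sum_congr rfl
  intro k _
  rw [Polynomial.C_mul_X_pow_eq_monomial]



set_option maxHeartbeats 1000000 in
/-- The key step: from a homogeneous witness of degree `d` for `J = I + (X i)`, produce a
homogeneous witness of degree `d+1` for `I`. -/
lemma step (G : SimpleGraph (Fin s)) (i : Fin s) {d : ℕ} {f : MvPolynomial (Fin s) K}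
    (hf : f.IsHomogeneous d) {p : Ideal (MvPolynomial (Fin s) K)} (hp : p.IsPrime)
    (hcol : Submodule.colon
        ((gEdgeIdeal K G ⊔ Ideal.span {(X i : MvPolynomial (Fin s) K)}) :
          Ideal (MvPolynomial (Fin s) K))
        (Ideal.span {f}) = p) :
    ∃ g : MvPolynomial (Fin s) K, g.IsHomogeneous (d + 1) ∧
      (Submodule.colon (gEdgeIdeal K G) (Ideal.span {g})).IsPrime := by
  classical
  set I : Ideal (MvPolynomial (Fin s) K) := gEdgeIdeal K G with hIdef
  set J : Ideal (MvPolynomial (Fin s) K) := I ⊔ Ideal.span {(X i : MvPolynomial (Fin s) K)}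
    with hJdef
  have hmem : ∀ r, r ∈ p ↔ r * f ∈ J := by
    intro r
    rw [← hcol, Ideal.mem_colon_span_singleton]
  have hJp : J ≤ p := by
    intro r hr
    exact (hmem r).mpr (Ideal.mul_mem_right f J hr)
  by_cases hA : ∃ j, G.Adj i j ∧ (X j : MvPolynomial (Fin s) K) ∉ p
  · -- Case A
    obtain ⟨j, hij, hXj⟩ := hA
    refine ⟨f * X j, hf.mul (isHomogeneous_X K j), ?_⟩
    have heq : Submodule.colon I (Ideal.span {f * X j}) = p := by
      ext u
      rw [Ideal.mem_colon_span_singleton]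
      constructor
      · intro hu
        have h1 : (u * X j) * f ∈ J := by
          have : (u * X j) * f = u * (f * X j) := by ring
          rw [this]
          exact le_sup_left (α := Ideal (MvPolynomial (Fin s) K)) hu
        have h2 : u * X j ∈ p := (hmem _).mpr h1
        rcases hp.mem_or_mem h2 with h | h
        · exact h
        · exact absurd h hXj
      · intro hu
        have huf : u * f ∈ J := (hmem u).mp hu
        rw [hJdef] at huf
        obtain ⟨a, ha, b, hb, hab⟩ := Submodule.mem_sup.mp huf
        obtain ⟨c, hc⟩ := Ideal.mem_span_singleton'.mp hb
        have hXiXj : (X i : MvPolynomial (Fin s) K) * X j ∈ I := by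
          rw [hIdef, gEdgeIdeal]
          exact Ideal.subset_span ⟨i, j, hij, rfl⟩
        have : u * (f * X j) = a * X j + c * ((X i : MvPolynomial (Fin s) K) * X j) := by
          rw [show a * X j + c * ((X i : MvPolynomial (Fin s) K) * X j)
              = (a + c * X i) * X j by ring, hc, hab]
          ring
        rw [this]
        exact Ideal.add_mem I (Ideal.mul_mem_right _ I ha) (Ideal.mul_mem_left I c hXiXj)
    rw [heq]
    exact hp
  · -- Case B
    push_neg at hA
    have hB : ∀ j, G.Adj i j → (X j : MvPolynomial (Fin s) K) ∈ p := hA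
    set f₀ : MvPolynomial (Fin s) K := part0 i f with hf₀def
    have hf₀free : iFree i f₀ := iFree_part0 i f
    have hp0 : ∀ r, r ∈ p ↔ r * f₀ ∈ J := by
      intro r
      rw [hmem r]
      have hdiff : r * f - r * f₀ ∈ J := by
        have h1 : f - f₀ ∈ J :=
          le_sup_right (α := Ideal (MvPolynomial (Fin s) K)) (sub_part0_mem i f)
        have : r * f - r * f₀ = r * (f - f₀) := by ring
        rw [this]
        exact Ideal.mul_mem_left J r h1
      constructor
      · intro h
        have := Ideal.sub_mem J h hdiff
        simpa using this
      · intro h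
        have := Ideal.add_mem J h hdiff
        simpa using this
    have hf₀p : f₀ ∉ p := by
      intro h
      have hsq : f₀ * f₀ ∈ J := (hp0 f₀).mp h
      have hJsq : f₀ ∈ J := by
        rw [hJdef, hIdef, J_eq_span] at hsq ⊢
        apply mem_of_sq_mem _ _ hsq
        rintro e (⟨a, b, hab, rfl⟩ | he) j
        · have hne : a ≠ b := hab.ne
          simp only [Finsupp.add_apply, Finsupp.single_apply]
          split <;> split <;> omega
        · rw [Set.mem_singleton_iff] at he
          subst he
          rw [Finsupp.single_apply]
          split <;> omega
      have h1 : (1 : MvPolynomial (Fin s) K) ∈ p := by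
        rw [hp0, one_mul]
        exact hJsq
      exact hp.ne_top (Ideal.eq_top_iff_one p |>.mpr h1)
    -- the witness
    refine ⟨f₀ * X i, (isHomogeneous_part0 hf).mul (isHomogeneous_X K i), ?_⟩
    set R := MvPolynomial {j : Fin s // j ≠ i} K
    set ψ : R →+* MvPolynomial (Fin s) K :=
      ((Phi K i).symm.toAlgHom.toRingHom).comp (Polynomial.C) with hψdef
    set p' : Ideal R := p.comap ψ with hp'def
    have hp' : p'.IsPrime := Ideal.IsPrime.comap ψ
    have hQ' : (Ideal.map (Polynomial.C : R →+* Polynomial R) p').IsPrime :=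
      (Ideal.isPrime_map_C_iff_isPrime p').mpr hp'
    set Φr : MvPolynomial (Fin s) K →+* Polynomial R := (Phi K i).toAlgHom.toRingHom with hΦrdef
    -- the local components
    have hvk : ∀ (v : MvPolynomial (Fin s) K) (k : ℕ),
        iFree i ((Phi K i).symm (Polynomial.C ((Phi K i v).coeff k))) := by
      intro v k
      exact iFree_Phi_symm_C i _
    have key : Submodule.colon I (Ideal.span {f₀ * X i}) =
        Ideal.comap Φr (Ideal.map (Polynomial.C : R →+* Polynomial R) p') := by
      ext v
      rw [Ideal.mem_colon_span_singleton, Ideal.mem_comap, Ideal.mem_map_C_iff]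
      have hcomap : ∀ k : ℕ, (Phi K i v).coeff k ∈ p' ↔
          (Phi K i).symm (Polynomial.C ((Phi K i v).coeff k)) ∈ p := by
        intro k
        rw [hp'def, Ideal.mem_comap, hψdef]
        rfl
      have hΦrv : Φr v = Phi K i v := rfl
      rw [hΦrv]
      simp only [hcomap]
      set n : ℕ := (Phi K i v).natDegree + 1 with hn
      set vk : ℕ → MvPolynomial (Fin s) K :=
        fun k => (Phi K i).symm (Polynomial.C ((Phi K i v).coeff k)) with hvkdef
      have hexpand : v * (f₀ * X i) =
          ∑ k ∈ Finset.range n, (X i : MvPolynomial (Fin s) K) ^ (k + 1) * (vk k * f₀) := by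
        conv_lhs => rw [decomp i v]
        rw [Finset.sum_mul]
        apply Finset.sum_congr rfl
        intro k _
        ring
      constructor
      · -- forward
        intro hv k
        by_cases hk : k < n
        · -- first claim
          have hwkfree : iFree i (vk k * f₀) := iFree_mul (hvk v k) hf₀free
          have hclaim1 : (X i : MvPolynomial (Fin s) K) ^ (k + 1) * (vk k * f₀) ∈ I := by
            rw [hIdef, mem_gEdgeIdeal_iff]
            intro μ hμ
            have hμi : μ i = k + 1 := supp_X_pow_mul hwkfree μ hμ
            have hceq : MvPolynomial.coeff μ (v * (f₀ * X i)) =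
                MvPolynomial.coeff μ ((X i : MvPolynomial (Fin s) K) ^ (k + 1) * (vk k * f₀)) := by
              rw [hexpand, MvPolynomial.coeff_sum]
              apply Finset.sum_eq_single_of_mem k (Finset.mem_range.mpr hk)
              intro m _ hmk
              by_contra hc
              have : μ ∈ ((X i : MvPolynomial (Fin s) K) ^ (m + 1) * (vk m * f₀)).support :=
                MvPolynomial.mem_support_iff.mpr hc
              have := supp_X_pow_mul (iFree_mul (hvk v m) hf₀free) μ this
              omega
            have hμmem : μ ∈ (v * (f₀ * X i)).support := by
              rw [MvPolynomial.mem_support_iff, hceq]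
              exact MvPolynomial.mem_support_iff.mp hμ
            rw [hIdef, mem_gEdgeIdeal_iff] at hv
            exact hv μ hμmem
          -- second claim : vk k * f₀ ∈ p
          have hwk : vk k * f₀ ∈ p := by
            -- auxiliary monomial ideal
            set E₀ : Set (Fin s →₀ ℕ) :=
              {μ | ∃ a b, G.Adj a b ∧ a ≠ i ∧ b ≠ i ∧
                μ = Finsupp.single a 1 + Finsupp.single b 1} with hE₀
            set N₁ : Set (Fin s →₀ ℕ) := {μ | ∃ b, G.Adj i b ∧ μ = Finsupp.single b 1} with hN₁
            have hM₀mem : vk k * f₀ ∈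
                Ideal.span ((fun m => monomial m (1 : K)) '' (E₀ ∪ N₁)) := by
              rw [mem_ideal_span_monomial_image]
              intro μ hμ
              have hμi : μ i = 0 := hwkfree μ hμ
              -- lift μ to the support of X i ^ (k+1) * (vk k * f₀)
              have hcoeffμ : MvPolynomial.coeff (Finsupp.single i (k + 1) + μ)
                  ((X i : MvPolynomial (Fin s) K) ^ (k + 1) * (vk k * f₀)) =
                  MvPolynomial.coeff μ (vk k * f₀) := coeff_X_pow_mul i (k + 1) _ μ
              have hmem' : (Finsupp.single i (k + 1) + μ) ∈
                  ((X i : MvPolynomial (Fin s) K) ^ (k + 1) * (vk k * f₀)).support := by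
                rw [MvPolynomial.mem_support_iff, hcoeffμ]
                exact MvPolynomial.mem_support_iff.mp hμ
              rw [hIdef, mem_gEdgeIdeal_iff] at hclaim1
              obtain ⟨a, b, hab, hle⟩ := hclaim1 _ hmem'
              by_cases hai : a = i
              · -- neighbor b
                have hbADJ : G.Adj i b := hai ▸ hab
                have hbi : i ≠ b := hbADJ.ne
                refine ⟨Finsupp.single b 1, Or.inr ⟨b, hbADJ, rfl⟩, ?_⟩
                rw [Finsupp.single_le_iff]
                have h1 : Finsupp.single b 1 ≤ Finsupp.single i (k + 1) + μ :=
                  le_trans le_add_self hle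
                rw [Finsupp.single_le_iff, Finsupp.add_apply, Finsupp.single_apply,
                  if_neg hbi, zero_add] at h1
                exact h1
              · by_cases hbi : b = i
                · have haADJ : G.Adj i a := hbi ▸ hab.symm
                  have hai' : i ≠ a := haADJ.ne
                  refine ⟨Finsupp.single a 1, Or.inr ⟨a, haADJ, rfl⟩, ?_⟩
                  rw [Finsupp.single_le_iff]
                  have h1 : Finsupp.single a 1 ≤ Finsupp.single i (k + 1) + μ :=
                    le_trans le_self_add hle
                  rw [Finsupp.single_le_iff, Finsupp.add_apply, Finsupp.single_apply,
                    if_neg hai', zero_add] at h1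
                  exact h1
                · refine ⟨Finsupp.single a 1 + Finsupp.single b 1,
                    Or.inl ⟨a, b, hab, hai, hbi, rfl⟩, ?_⟩
                  rw [Finsupp.le_def] at hle ⊢
                  intro j
                  by_cases hji : j = i
                  · subst hji
                    rw [Finsupp.add_apply, Finsupp.single_apply, Finsupp.single_apply,
                      if_neg hai, if_neg hbi]
                    exact Nat.zero_le _
                  · have h1 := hle j
                    have h2 : (Finsupp.single i (k + 1) + μ) j = μ j := by
                      rw [Finsupp.add_apply, Finsupp.single_apply,
                        if_neg (fun h : i = j => hji h.symm), zero_add]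
                    rw [h2] at h1
                    exact h1
            have hM₀le : Ideal.span ((fun m => monomial m (1 : K)) '' (E₀ ∪ N₁)) ≤ p := by
              rw [Ideal.span_le]
              rintro _ ⟨e, (⟨a, b, hab, hai, hbi, rfl⟩ | ⟨b, hb, rfl⟩), rfl⟩
              · show (monomial (Finsupp.single a 1 + Finsupp.single b 1) (1 : K)) ∈ (p : Set _)
                rw [SetLike.mem_coe, show (monomial (Finsupp.single a 1 + Finsupp.single b 1)
                    (1 : K)) = X a * X b from (X_mul_X a b).symm]
                apply hJp
                apply le_sup_left (α := Ideal (MvPolynomial (Fin s) K))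
                rw [hIdef, gEdgeIdeal]
                exact Ideal.subset_span ⟨a, b, hab, rfl⟩
              · show (monomial (Finsupp.single b 1) (1 : K)) ∈ (p : Set _)
                rw [SetLike.mem_coe, ← X_eq_monomial]
                exact hB b hb
            exact hM₀le hM₀mem
          rcases hp.mem_or_mem hwk with h | h
          · exact h
          · exact absurd h hf₀p
        · -- k beyond the degree: the coefficient is zero
          have hc0 : (Phi K i v).coeff k = 0 :=
            Polynomial.coeff_eq_zero_of_natDegree_lt (by omega)
          simp only [hc0, Polynomial.C_0, map_zero]
          exact p.zero_mem
      · -- backward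
        intro hall
        rw [hexpand]
        apply Ideal.sum_mem
        intro k _
        have h1 : vk k * f₀ ∈ J := (hp0 (vk k)).mp (hall k)
        have h2 : iFree i (vk k * f₀) := iFree_mul (hvk v k) hf₀free
        have h3 : vk k * f₀ ∈ I := by
          rw [hJdef, hIdef, mem_J_iff] at h1
          rw [hIdef, mem_gEdgeIdeal_iff]
          intro μ hμ
          rcases h1 μ hμ with h | h
          · exact h
          · exfalso
            rw [Finsupp.le_def] at h
            have := h i
            rw [Finsupp.single_apply, if_pos rfl] at this
            rw [h2 μ hμ] at this
            omega
        exact Ideal.mul_mem_left I _ h3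
    rw [key]
    exact Ideal.IsPrime.comap Φr



/-- Existence of a degree ≥ 1 homogeneous witness with prime colon ideal for `J = I + (X i)`. -/
lemma exists_witness (G : SimpleGraph (Fin s)) (i : Fin s) (hs : ∃ j : Fin s, j ≠ i) :
    ∃ d : ℕ, 1 ≤ d ∧ ∃ f : MvPolynomial (Fin s) K, f.IsHomogeneous d ∧
      (Submodule.colon
        ((gEdgeIdeal K G ⊔ Ideal.span {(X i : MvPolynomial (Fin s) K)}) :
          Ideal (MvPolynomial (Fin s) K))
        (Ideal.span {f})).IsPrime := by
  classical
  set 𝒜 : Finset (Finset (Fin s)) :=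
    Finset.univ.filter (fun A => i ∉ A ∧ ∀ a ∈ A, ∀ b ∈ A, ¬ G.Adj a b) with h𝒜
  have hemp : ∅ ∈ 𝒜 := by simp [h𝒜]
  obtain ⟨A, hA𝒜, hAmax⟩ := Finset.exists_max_image 𝒜 Finset.card ⟨∅, hemp⟩
  rw [h𝒜, Finset.mem_filter] at hA𝒜
  obtain ⟨-, hiA, hstable⟩ := hA𝒜
  have hcov : ∀ c, c ∉ A → c ≠ i → ∃ b ∈ A, G.Adj c b := by
    intro c hcA hci
    have hnotin : insert c A ∉ 𝒜 := by
      intro hmem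
      have := hAmax _ hmem
      rw [Finset.card_insert_of_notMem hcA] at this
      omega
    rw [h𝒜, Finset.mem_filter, not_and] at hnotin
    have h2 := hnotin (Finset.mem_univ _)
    push_neg at h2
    have hi' : i ∉ insert c A := by
      rw [Finset.mem_insert]
      rintro (h | h)
      · exact hci h.symm
      · exact hiA h
    obtain ⟨a, ha, b, hb, hab⟩ := h2 hi'
    rcases Finset.mem_insert.mp ha with rfl | haA
    · rcases Finset.mem_insert.mp hb with rfl | hbA
      · exact absurd hab (G.irrefl)
      · exact ⟨b, hbA, hab⟩
    · rcases Finset.mem_insert.mp hb with rfl | hbA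
      · exact ⟨a, haA, hab.symm⟩
      · exact absurd hab (hstable a haA b hbA)
  have hApos : A.Nonempty := by
    rw [Finset.nonempty_iff_ne_empty]
    intro hAemp
    obtain ⟨j, hj⟩ := hs
    have hjA : j ∉ A := by rw [hAemp]; exact Finset.notMem_empty j
    obtain ⟨b, hbA, -⟩ := hcov j hjA hj
    rw [hAemp] at hbA
    exact Finset.notMem_empty b hbA
  set μA : Fin s →₀ ℕ := ∑ a ∈ A, Finsupp.single a 1 with hμA
  have hμA_apply : ∀ c, μA c = if c ∈ A then 1 else 0 := by
    intro c
    rw [hμA, Finset.sum_apply']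
    by_cases hc : c ∈ A
    · rw [if_pos hc, Finset.sum_eq_single c]
      · rw [Finsupp.single_apply, if_pos rfl]
      · intro b _ hbc
        rw [Finsupp.single_apply, if_neg hbc]
      · intro h; exact absurd hc h
    · rw [if_neg hc]
      apply Finset.sum_eq_zero
      intro a haA
      rw [Finsupp.single_apply, if_neg (fun h : a = c => hc (h ▸ haA))]
  refine ⟨A.card, Finset.card_pos.mpr hApos, monomial μA (1 : K), ?_, ?_⟩
  · apply isHomogeneous_monomial
    rw [hμA, Finsupp.degree_eq_weight_one, map_sum]
    have h1 : ∀ a : Fin s, (Finsupp.weight (fun _ => 1 : Fin s → ℕ)) (Finsupp.single a 1) = 1 := by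
      intro a
      rw [Finsupp.weight_apply, Finsupp.sum_single_index] <;> simp
    rw [Finset.sum_congr rfl (fun a _ => h1 a), Finset.sum_const, smul_eq_mul, mul_one]
  · have hcol : (Submodule.colon
        ((gEdgeIdeal K G ⊔ Ideal.span {(X i : MvPolynomial (Fin s) K)}) :
          Ideal (MvPolynomial (Fin s) K))
        (Ideal.span {monomial μA (1 : K)})) =
        Ideal.span (X '' {c : Fin s | c ∉ A} : Set (MvPolynomial (Fin s) K)) := by
      apply le_antisymm
      · intro u hu
        rw [Ideal.mem_colon_span_singleton] at hu
        rw [mem_ideal_span_X_image]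
        intro μ hμ
        by_contra hall
        push_neg at hall
        have hsuppA : ∀ c, c ∉ A → μ c = 0 := fun c hc => hall c hc
        have hcoeff : MvPolynomial.coeff (μ + μA) (u * monomial μA (1 : K)) =
            MvPolynomial.coeff μ u := by
          rw [coeff_mul_monomial, mul_one]
        have hmem' : μ + μA ∈ (u * monomial μA (1 : K)).support := by
          rw [MvPolynomial.mem_support_iff, hcoeff]
          exact MvPolynomial.mem_support_iff.mp hμ
        have hzero : ∀ c, c ∉ A → (μ + μA) c = 0 := by
          intro c hc
          rw [Finsupp.add_apply, hμA_apply, if_neg hc, hsuppA c hc]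
        rw [mem_J_iff] at hu
        rcases hu _ hmem' with ⟨a, b, hab, hle⟩ | hle
        · have ha : 1 ≤ (μ + μA) a := by
            have := le_trans le_self_add hle
            rwa [Finsupp.single_le_iff] at this
          have hb : 1 ≤ (μ + μA) b := by
            have := le_trans le_add_self hle
            rwa [Finsupp.single_le_iff] at this
          have haA : a ∈ A := by
            by_contra h
            rw [hzero a h] at ha; omega
          have hbA : b ∈ A := by
            by_contra h
            rw [hzero b h] at hb; omega
          exact hstable a haA b hbA hab
        · rw [Finsupp.single_le_iff] at hle
          rw [hzero i hiA] at hle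
          omega
      · rw [Ideal.span_le]
        rintro _ ⟨c, hc, rfl⟩
        rw [Set.mem_setOf_eq] at hc
        rw [SetLike.mem_coe, Ideal.mem_colon_span_singleton]
        by_cases hci : c = i
        · subst hci
          have hXi : (X c : MvPolynomial (Fin s) K) ∈
              gEdgeIdeal K G ⊔ Ideal.span {(X c : MvPolynomial (Fin s) K)} :=
            le_sup_right (α := Ideal (MvPolynomial (Fin s) K)) (Ideal.subset_span rfl)
          exact Ideal.mul_mem_right _ _ hXi
        · obtain ⟨b, hbA, hcb⟩ := hcov c hc hci
          have hsplit : μA = Finsupp.single b 1 + ∑ a ∈ A.erase b, Finsupp.single a 1 := by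
            rw [hμA, ← Finset.add_sum_erase A _ hbA]
          have hfact : (monomial μA (1 : K)) =
              X b * monomial (∑ a ∈ A.erase b, Finsupp.single a 1) (1 : K) := by
            rw [hsplit]
            rw [monomial_single_add, pow_one]
          rw [hfact]
          have hedge : (X c : MvPolynomial (Fin s) K) * X b ∈ gEdgeIdeal K G := by
            rw [gEdgeIdeal]
            exact Ideal.subset_span ⟨c, b, hcb, rfl⟩
          have : (X c : MvPolynomial (Fin s) K) *
              (X b * monomial (∑ a ∈ A.erase b, Finsupp.single a 1) (1 : K)) =
              ((X c : MvPolynomial (Fin s) K) * X b) *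
                monomial (∑ a ∈ A.erase b, Finsupp.single a 1) (1 : K) := by ring
          rw [this]
          exact le_sup_left (α := Ideal (MvPolynomial (Fin s) K))
            (Ideal.mul_mem_right _ _ hedge)
    rw [hcol]
    exact isPrime_span_X_image _


end VNumAux
/-- For the edge ideal `I = I(G)` of a graph and any vertex `i`,
`v(I) ≤ v((I, t_i)) + 1`. -/
theorem vNumber_le_vNumber_sup_add_one {K : Type*} [Field K] {s : ℕ}
    (G : SimpleGraph (Fin s)) (i : Fin s) :
    vNumber (gEdgeIdeal K G) ≤
      vNumber (gEdgeIdeal K G ⊔ Ideal.span {(X i : MvPolynomial (Fin s) K)}) + 1 := by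
  classical
  by_cases hI : gEdgeIdeal K G =
      Ideal.span (Set.range (X : Fin s → MvPolynomial (Fin s) K))
  · rw [vNumber, if_pos hI]
    exact Nat.zero_le _
  by_cases hJ : gEdgeIdeal K G ⊔ Ideal.span {(X i : MvPolynomial (Fin s) K)} =
      Ideal.span (Set.range (X : Fin s → MvPolynomial (Fin s) K))
  · -- Degenerate case: `J` is the maximal graded ideal; then `s = 1` and `I = ⊥`.
    have hall : ∀ j : Fin s, j = i := by
      by_contra hne
      push_neg at hne
      obtain ⟨j, hj⟩ := hne
      have hXj : (X j : MvPolynomial (Fin s) K) ∈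
          gEdgeIdeal K G ⊔ Ideal.span {(X i : MvPolynomial (Fin s) K)} := by
        rw [hJ]
        exact Ideal.subset_span ⟨j, rfl⟩
      rw [VNumAux.mem_J_iff] at hXj
      have hsupp : (Finsupp.single j 1) ∈ (X j : MvPolynomial (Fin s) K).support := by
        rw [VNumAux.X_eq_monomial, support_monomial, if_neg one_ne_zero]
        exact Finset.mem_singleton_self _
      rcases hXj _ hsupp with ⟨a, b, hab, hle⟩ | hle
      · have ha : 1 ≤ (Finsupp.single j 1) a := by
          have := le_trans le_self_add hle
          rwa [Finsupp.single_le_iff] at this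
        have hb : 1 ≤ (Finsupp.single j 1) b := by
          have := le_trans le_add_self hle
          rwa [Finsupp.single_le_iff] at this
        rw [Finsupp.single_apply] at ha hb
        have ha' : j = a := by
          by_contra h
          rw [if_neg h] at ha
          omega
        have hb' : j = b := by
          by_contra h
          rw [if_neg h] at hb
          omega
        exact hab.ne (ha'.symm.trans hb')
      · rw [Finsupp.single_le_iff, Finsupp.single_apply,
          if_neg (fun h : j = i => hj h)] at hle
        omega
    have hIbot : gEdgeIdeal K G = ⊥ := by
      rw [gEdgeIdeal]
      have : {m : MvPolynomial (Fin s) K | ∃ a b : Fin s, G.Adj a b ∧ m = X a * X b} = ∅ := by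
        ext m
        simp only [Set.mem_setOf_eq, Set.mem_empty_iff_false, iff_false]
        rintro ⟨a, b, hab, -⟩
        exact hab.ne ((hall a).trans (hall b).symm)
      rw [this, Ideal.span_empty]
    rw [vNumber, if_neg hI, vNumber, if_pos hJ]
    have h1 : (1 : ℕ) ∈ {d : ℕ | 1 ≤ d ∧ ∃ f : MvPolynomial (Fin s) K, f.IsHomogeneous d ∧
        ∃ p ∈ associatedPrimes (MvPolynomial (Fin s) K)
          (MvPolynomial (Fin s) K ⧸ gEdgeIdeal K G),
        Submodule.colon (gEdgeIdeal K G) (Ideal.span {f}) = p} := by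
      refine ⟨le_refl 1, X i, isHomogeneous_X K i, ?_⟩
      have hcb : Submodule.colon (gEdgeIdeal K G)
          (Ideal.span {(X i : MvPolynomial (Fin s) K)}) = ⊥ := by
        ext u
        rw [Ideal.mem_colon_span_singleton, hIbot, Ideal.mem_bot, Ideal.mem_bot, mul_eq_zero]
        simp [MvPolynomial.X_ne_zero]
      refine ⟨_, VNumAux.colon_mem_associatedPrimes _ _ ?_, rfl⟩
      rw [hcb]
      exact Ideal.bot_prime
    exact le_trans (Nat.sInf_le h1) (by omega)
  · -- Main case.
    rw [vNumber, if_neg hI, vNumber, if_neg hJ]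
    have hs2 : ∃ j : Fin s, j ≠ i := by
      by_contra h
      push_neg at h
      apply hJ
      have hIbot : gEdgeIdeal K G = ⊥ := by
        rw [gEdgeIdeal]
        have : {m : MvPolynomial (Fin s) K | ∃ a b : Fin s, G.Adj a b ∧ m = X a * X b} = ∅ := by
          ext m
          simp only [Set.mem_setOf_eq, Set.mem_empty_iff_false, iff_false]
          rintro ⟨a, b, hab, -⟩
          exact hab.ne ((h a).trans (h b).symm)
        rw [this, Ideal.span_empty]
      have hrange : Set.range (X : Fin s → MvPolynomial (Fin s) K) = {X i} := by
        ext m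
        constructor
        · rintro ⟨j, rfl⟩
          rw [h j]
          rfl
        · rintro rfl
          exact ⟨i, rfl⟩
      rw [hIbot, hrange, bot_sup_eq]
    have hne : {d : ℕ | 1 ≤ d ∧ ∃ f : MvPolynomial (Fin s) K, f.IsHomogeneous d ∧
        ∃ p ∈ associatedPrimes (MvPolynomial (Fin s) K)
          (MvPolynomial (Fin s) K ⧸
            (gEdgeIdeal K G ⊔ Ideal.span {(X i : MvPolynomial (Fin s) K)})),
        Submodule.colon (gEdgeIdeal K G ⊔ Ideal.span {(X i : MvPolynomial (Fin s) K)})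
          (Ideal.span {f}) = p}.Nonempty := by
      obtain ⟨d, hd1, f, hf, hprime⟩ := VNumAux.exists_witness (K := K) G i hs2
      exact ⟨d, hd1, f, hf, _, VNumAux.colon_mem_associatedPrimes _ _ hprime, rfl⟩
    obtain ⟨hd1, f, hf, p, hpassoc, hcolon⟩ := Nat.sInf_mem hne
    have hp : p.IsPrime := hpassoc.isPrime
    obtain ⟨g, hg, hgprime⟩ := VNumAux.step G i hf hp hcolon
    apply Nat.sInf_le
    refine ⟨by omega, g, hg, _, VNumAux.colon_mem_associatedPrimes _ _ hgprime, rfl⟩
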